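/- Let f ∈ R[x] be a monic basic irreducible polynomial and let M ∈ R[x] be coprime to f in R[x]. Set K = R[x]/⟨f^{p^s} + γ f^{p^{s−1}} M⟩. Then in K the ideals generated by f^{p^s} and by γ f^{p^{s−1}} coincide, and the nilpotency index of the image of f in K (the least positive integer N with f^N = 0 in K) equals 2p^s − p^{s−1}. -/

import Mathlib

open Polynomial

/-- in `K = R[x]/⟨f^{p^s} + γ f^{p^{s-1}} M⟩` (with `M` coprime to the
monic basic irreducible `f`), the ideals `⟨f^{p^s}⟩` and `⟨γ f^{p^{s-1}}⟩` coincide,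
and the nilpotency index of `f` in `K` is `2p^s − p^{s-1}`. -/
theorem stmt2 {R : Type} [CommRing R] [Finite R]
    (p m s n : ℕ) (hp : p.Prime) (hm : 0 < m) (hs : 0 < s) (hn : 0 < n)
    (hnp : Nat.gcd n p = 1)
    (γ : R) (hγ : γ ≠ 0) (hγ2 : γ ^ 2 = 0)
    (hmax : ∀ a : R, a ∈ Ideal.span {γ} ↔ ¬ IsUnit a)
    (hres : Nat.card (R ⧸ Ideal.span {γ}) = p ^ m)
    (f M : R[X]) (hf : f.Monic)
    (hfi : Irreducible (f.map (Ideal.Quotient.mk (Ideal.span {γ}))))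
    (hfM : IsCoprime f M) :
    Ideal.span {Ideal.Quotient.mk (Ideal.span {f ^ p ^ s + C γ * f ^ p ^ (s - 1) * M})
        (f ^ p ^ s)} =
      Ideal.span {Ideal.Quotient.mk (Ideal.span {f ^ p ^ s + C γ * f ^ p ^ (s - 1) * M})
        (C γ * f ^ p ^ (s - 1))} ∧
    IsLeast {N : ℕ | 0 < N ∧
        (Ideal.Quotient.mk (Ideal.span {f ^ p ^ s + C γ * f ^ p ^ (s - 1) * M}) f) ^ N = 0}
      (2 * p ^ s - p ^ (s - 1)) := by
  have hCγ2 : (C γ : R[X]) * C γ = 0 := by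
    rw [← C_mul, ← pow_two, hγ2, C_0]
  have hCsq : (C γ : R[X]) ^ 2 = 0 := by rw [sq]; exact hCγ2
  -- numerics
  have hq1 : p ^ s = p * p ^ (s - 1) := by
    conv_lhs => rw [show s = (s - 1) + 1 by omega, pow_succ, mul_comm]
  have hq1le : p ^ (s - 1) < p ^ s := by
    rw [hq1]
    have : 0 < p ^ (s - 1) := Nat.pow_pos hp.pos
    nlinarith [hp.two_le]
  set t : ℕ := p ^ s - p ^ (s - 1) with ht_def
  have ht : 0 < t := by omega
  have htq : p ^ (s - 1) + t = p ^ s := by omega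
  set g : R[X] := f ^ p ^ s + C γ * f ^ p ^ (s - 1) * M with hg_def
  set I : Ideal R[X] := Ideal.span {g} with hI_def
  have hγg : C γ * g = C γ * f ^ p ^ s := by
    rw [hg_def]; linear_combination (f ^ p ^ (s - 1) * M) * hCsq
  -- residue field setup
  have hprime : (Ideal.span {γ}).IsPrime := by
    constructor
    · intro h
      have : (1:R) ∈ Ideal.span {γ} := h ▸ trivial
      exact (hmax 1).mp this isUnit_one
    · intro a b hab
      by_contra h
      push_neg at h
      obtain ⟨ha, hb⟩ := h
      have := ((hmax a).not_left.mp ha).mul ((hmax b).not_left.mp hb)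
      exact (hmax _).mp hab this
  set φ : R[X] →+* (R ⧸ Ideal.span {γ})[X] :=
    Polynomial.mapRingHom (Ideal.Quotient.mk (Ideal.span {γ})) with hφ_def
  have hφC : φ (C γ) = 0 := by
    simp [hφ_def, Ideal.Quotient.eq_zero_iff_mem, Ideal.mem_span_singleton]
  have hfbar : (φ f).Monic := hf.map _
  have hfbar0 : φ f ≠ 0 := hfbar.ne_zero
  -- annihilator fact: γ * a = 0 → a ∈ span γ
  have hann : ∀ a : R, γ * a = 0 → a ∈ Ideal.span {γ} := by
    intro a ha
    by_contra h
    obtain ⟨u, hu⟩ := (hmax a).not_left.mp h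
    have : γ * a * (↑u⁻¹ : R) = 0 := by rw [ha, zero_mul]
    rw [← hu, mul_assoc] at this
    simp at this
    exact hγ this
  -- key: ¬ g ∣ f ^ (p^s + t - 1)
  have hnotdvd : ¬ g ∣ f ^ (p ^ s + t - 1) := by
    rintro ⟨q, hq⟩
    have hcancel : f ^ (2 * t - 1) = (f ^ t + C γ * M) * q := by
      have hreg := (hf.pow (p ^ (s - 1))).isRegular.left
      have e1 : f ^ p ^ (s - 1) * f ^ (2 * t - 1) = f ^ (p ^ s + t - 1) := by
        rw [← pow_add]; congr 1; omega
      have eps : f ^ p ^ s = f ^ p ^ (s - 1) * f ^ t := by rw [← pow_add, htq]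
      refine hreg ?_
      calc f ^ p ^ (s - 1) * f ^ (2 * t - 1) = f ^ (p ^ s + t - 1) := e1
        _ = g * q := hq
        _ = f ^ p ^ (s - 1) * ((f ^ t + C γ * M) * q) := by rw [hg_def, eps]; ring
    -- reduce mod γ : q̄ = f̄^(t-1)
    have hqbar : φ q = φ f ^ (t - 1) := by
      have := congrArg φ hcancel
      rw [map_pow, map_mul, map_add, map_pow, map_mul, hφC, zero_mul, add_zero] at this
      have e2 : φ f ^ (2 * t - 1) = φ f ^ t * φ f ^ (t - 1) := by
        rw [← pow_add]; congr 1; omega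
      rw [e2] at this
      have := mul_left_cancel₀ (pow_ne_zero t hfbar0) this
      exact this.symm
    -- q = f^(t-1) + C γ * r
    have hker : q - f ^ (t - 1) ∈ RingHom.ker φ := by
      rw [RingHom.mem_ker, map_sub, map_pow, hqbar, sub_self]
    rw [hφ_def, Polynomial.ker_mapRingHom, Ideal.mk_ker, Ideal.map_span, Set.image_singleton,
      Ideal.mem_span_singleton] at hker
    obtain ⟨r, hr⟩ := hker
    have hq' : q = f ^ (t - 1) + C γ * r := by
      rw [← hr]; ring
    -- plug back in
    have hzero : C γ * (f ^ (t - 1) * M + f ^ t * r) = 0 := by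
      have e3 : f ^ t * f ^ (t - 1) = f ^ (2 * t - 1) := by
        rw [← pow_add]; congr 1; omega
      have hc2 : f ^ (2 * t - 1) = (f ^ t + C γ * M) * (f ^ (t - 1) + C γ * r) := by
        rw [← hq']; exact hcancel
      linear_combination -hc2 - e3 - M * r * hCsq
    -- so all coefficients of h := ... lie in span γ, i.e. φ h = 0
    have hφh : φ (f ^ (t - 1) * M + f ^ t * r) = 0 := by
      have : ∀ i, (f ^ (t - 1) * M + f ^ t * r).coeff i ∈ Ideal.span {γ} := by
        intro i
        apply hann
        have := congrArg (fun P => Polynomial.coeff P i) hzero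
        simpa [coeff_C_mul] using this
      ext i
      simp only [hφ_def, coe_mapRingHom, coeff_map, coeff_zero,
        Ideal.Quotient.eq_zero_iff_mem]
      exact this i
    rw [map_add, map_mul, map_mul, map_pow, map_pow] at hφh
    -- f̄ divides M̄
    have hdvd : φ f ∣ φ M := by
      have : φ f ^ (t - 1) * (φ M + φ f * φ r) = 0 := by
        have e4 : φ f ^ t = φ f ^ (t - 1) * φ f := by
          rw [← pow_succ]; congr 1; omega
        rw [e4] at hφh
        linear_combination hφh
      rcases mul_eq_zero.mp this with h | h
      · exact absurd h (pow_ne_zero _ hfbar0)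
      · exact ⟨-φ r, by linear_combination h⟩
    have hcop : IsCoprime (φ f) (φ M) := by
      obtain ⟨a, b, hab⟩ := hfM
      exact ⟨φ a, φ b, by rw [← map_mul, ← map_mul, ← map_add, hab, map_one]⟩
    exact hfi.not_isUnit (hcop.isUnit_of_dvd' dvd_rfl hdvd)
  -- abbreviation for quotient map
  set π : R[X] →+* R[X] ⧸ I := Ideal.Quotient.mk I with hπ_def
  have hπg : π g = 0 := by
    rw [hπ_def, Ideal.Quotient.eq_zero_iff_mem, hI_def]
    exact Ideal.mem_span_singleton_self g
  -- coprimality of f^(p^s) and M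
  obtain ⟨u, v, huv⟩ := (hfM.pow_left : IsCoprime (f ^ p ^ s) M)
  constructor
  · -- ideal equality
    apply le_antisymm <;> rw [Ideal.span_singleton_le_span_singleton]
    · -- C γ * f^(p^(s-1)) ∣ f^(p^s) in quotient
      refine ⟨π (-M), ?_⟩
      have key1 : f ^ p ^ s - C γ * f ^ p ^ (s - 1) * (-M) = g := by rw [hg_def]; ring
      have h := congrArg π key1
      simp only [map_sub, map_mul, map_neg, hπg] at h
      simp only [map_mul, map_neg]
      linear_combination h
    · -- f^(p^s) ∣ C γ * f^(p^(s-1))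
      refine ⟨π (u * C γ * f ^ p ^ (s - 1) - v), ?_⟩
      have key : C γ * f ^ p ^ (s - 1) - f ^ p ^ s * (u * C γ * f ^ p ^ (s - 1) - v) = v * g := by
        have h1 : C γ * f ^ p ^ (s - 1) * (u * f ^ p ^ s + v * M) = C γ * f ^ p ^ (s - 1) := by
          rw [huv, mul_one]
        have h2 : v * (C γ * f ^ p ^ (s - 1) * M) = v * (g - f ^ p ^ s) := by
          rw [hg_def]; ring
        linear_combination h2 - h1
      have h := congrArg π key
      simp only [map_sub, map_mul, hπg, mul_zero] at h
      simp only [map_sub, map_mul]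
      linear_combination h
  · constructor
    · -- N₀ is in the set
      refine ⟨by omega, ?_⟩
      rw [← map_pow, hπ_def, Ideal.Quotient.eq_zero_iff_mem, hI_def,
        Ideal.mem_span_singleton]
      refine ⟨f ^ t - C γ * M, ?_⟩
      have e5 : f ^ (2 * p ^ s - p ^ (s - 1)) = f ^ p ^ s * f ^ t := by
        rw [← pow_add]; congr 1; omega
      have e6 : C γ * f ^ p ^ (s - 1) * M * f ^ t = C γ * f ^ p ^ s * M := by
        have efp : f ^ p ^ (s - 1) * f ^ t = f ^ p ^ s := by rw [← pow_add, htq]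
        linear_combination C γ * M * efp
      calc f ^ (2 * p ^ s - p ^ (s - 1)) = f ^ p ^ s * f ^ t := e5
        _ = (g - C γ * f ^ p ^ (s - 1) * M) * f ^ t := by rw [hg_def]; ring
        _ = g * f ^ t - C γ * f ^ p ^ s * M := by rw [sub_mul, e6]
        _ = g * f ^ t - (C γ * g) * M := by rw [hγg]
        _ = g * (f ^ t - C γ * M) := by ring
    · -- lower bound
      rintro N ⟨hN0, hNzero⟩
      by_contra hlt
      push_neg at hlt
      apply hnotdvd
      rw [← Ideal.mem_span_singleton, ← hI_def, ← Ideal.Quotient.eq_zero_iff_mem]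
      have : (Ideal.Quotient.mk I) (f ^ (p ^ s + t - 1)) =
          (Ideal.Quotient.mk I) (f ^ N * f ^ (p ^ s + t - 1 - N)) := by
        congr 1; rw [← pow_add]; congr 1; omega
      rw [this, map_mul, map_pow]
      rw [hπ_def] at hNzero
      rw [hNzero, zero_mul]
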